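/- Let G be a thin spider with spider partition (S, C, R) and R nonempty. Then i_R(G) = |C| + 1. -/
import Mathlib

/-- `f` is an Independent Roman Dominating Function of `G`: values in {0,1,2},
every 0-labeled vertex has a 2-labeled neighbor, and no two adjacent vertices
are both positively labeled. -/
def IsIRDF {V : Type*} (G : SimpleGraph V) (f : V → ℕ) : Prop :=
  (∀ v, f v ≤ 2) ∧
  (∀ v, f v = 0 → ∃ u, G.Adj v u ∧ f u = 2) ∧
  (∀ u v, G.Adj u v → f u = 0 ∨ f v = 0)

/-- The weight of a labeling. -/
def irdfWeight {V : Type*} [Fintype V] (f : V → ℕ) : ℕ := ∑ v, f v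

/-- The independent Roman domination number. -/
noncomputable def iR {V : Type*} [Fintype V] (G : SimpleGraph V) : ℕ :=
  sInf {w | ∃ f : V → ℕ, IsIRDF G f ∧ irdfWeight f = w}

/-- `s` is an independent dominating set of `G`. -/
def IsIndepDom {V : Type*} (G : SimpleGraph V) (s : Finset V) : Prop :=
  (∀ u ∈ s, ∀ v ∈ s, ¬ G.Adj u v) ∧ (∀ v, v ∉ s → ∃ u ∈ s, G.Adj u v)

/-- The independent domination number. -/
noncomputable def indepDomNum {V : Type*} [Fintype V] (G : SimpleGraph V) : ℕ :=
  sInf {n | ∃ s : Finset V, IsIndepDom G s ∧ s.card = n}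

section Spider

variable {V : Type*} [Fintype V] [DecidableEq V] (G : SimpleGraph V)
  {l : ℕ} (c s : Fin l → V) (R : Finset V)

/-- The spider partition data: `c` enumerates the clique `C`, `s` the independent
set `S`, `R` is the head (the remaining vertices), every vertex of `R` is adjacent
to every vertex of `C` and to no vertex of `S`. -/
def IsSpiderPartition : Prop :=
  2 ≤ l ∧ Function.Injective c ∧ Function.Injective s ∧
  (∀ i j, c i ≠ s j) ∧
  (∀ v, v ∈ R ↔ ∀ i, v ≠ c i ∧ v ≠ s i) ∧
  (∀ i j, i ≠ j → G.Adj (c i) (c j)) ∧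
  (∀ i j, ¬ G.Adj (s i) (s j)) ∧
  (∀ v ∈ R, ∀ i, G.Adj v (c i)) ∧
  (∀ v ∈ R, ∀ i, ¬ G.Adj v (s i))

/-- A thin spider: `N(s i) = {c i}`. -/
def IsThinSpider : Prop :=
  IsSpiderPartition G c s R ∧ ∀ i v, G.Adj (s i) v ↔ v = c i

/-- A thick spider: `N(s i) = C \ {c i}`. -/
def IsThickSpider : Prop :=
  IsSpiderPartition G c s R ∧ ∀ i v, G.Adj (s i) v ↔ ∃ j, j ≠ i ∧ v = c j

end Spider

/-- Helper: sum lower bound from an independent set of labeled vertices. -/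
lemma spider_sum_bound {V : Type*} [Fintype V] [DecidableEq V] {l : ℕ} (s : Fin l → V)
    (hsinj : Function.Injective s) (f : V → ℕ)
    (A : Finset (Fin l)) (x : V) (hx : ∀ j, x ≠ s j)
    (hone : ∀ j ∈ A, 1 ≤ f (s j)) :
    A.card + f x ≤ irdfWeight f := by
  have hxim : x ∉ A.image s := by
    simp only [Finset.mem_image]; rintro ⟨j, _, hj⟩; exact hx j hj.symm
  have h1 : ∑ v ∈ insert x (A.image s), f v ≤ irdfWeight f :=
    Finset.sum_le_sum_of_subset (Finset.subset_univ _)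
  have h2 : ∑ v ∈ insert x (A.image s), f v = f x + ∑ j ∈ A, f (s j) := by
    rw [Finset.sum_insert hxim, Finset.sum_image (fun a _ b _ h => hsinj h)]
  have h3 : A.card ≤ ∑ j ∈ A, f (s j) := by
    calc A.card = ∑ _j ∈ A, 1 := by simp
    _ ≤ ∑ j ∈ A, f (s j) := Finset.sum_le_sum hone
  omega

/-- a thin spider with nonempty head has `i_R(G) = |C| + 1`. -/
theorem iR_thin_spider {V : Type*} [Fintype V] [DecidableEq V]
    (G : SimpleGraph V) {l : ℕ} (c s : Fin l → V) (R : Finset V)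
    (hspider : IsThinSpider G c s R) (hR : R.Nonempty) :
    iR G = l + 1 := by
  obtain ⟨⟨hl, hcinj, hsinj, hcs, hRmem, hcc, hss, hRc, hRs⟩, hthin⟩ := hspider
  -- adjacency of s j to anything
  have hadj_sc : ∀ i j, G.Adj (c i) (s j) ↔ i = j := by
    intro i j
    rw [G.adj_comm, hthin]
    exact ⟨fun h => (hcinj h.symm).symm, fun h => by rw [h]⟩
  set i0 : Fin l := ⟨0, by omega⟩ with hi0
  -- the upper-bound labeling
  set T : Finset V := (Finset.univ.erase i0).image s with hT
  set f : V → ℕ := fun v => if v = c i0 then 2 else if v ∈ T then 1 else 0 with hf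
  have hfc : f (c i0) = 2 := by simp [hf]
  have hsT : ∀ j, s j ∈ T ↔ j ≠ i0 := by
    intro j
    simp only [hT, Finset.mem_image, Finset.mem_erase, Finset.mem_univ, and_true]
    exact ⟨fun ⟨a, ha, h⟩ => by rwa [hsinj h] at ha, fun h => ⟨j, h, rfl⟩⟩
  have hfs : ∀ j, j ≠ i0 → f (s j) = 1 := by
    intro j hj
    simp only [hf]
    rw [if_neg (Ne.symm (hcs i0 j)), if_pos ((hsT j).mpr hj)]
  have hTmem : ∀ v ∈ T, ∃ j, j ≠ i0 ∧ v = s j := by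
    intro v hv
    simp only [hT, Finset.mem_image, Finset.mem_erase, Finset.mem_univ, and_true] at hv
    obtain ⟨j, hj, rfl⟩ := hv
    exact ⟨j, hj, rfl⟩
  have hIRDF : IsIRDF G f := by
    refine ⟨fun v => by simp only [hf]; split_ifs <;> omega, ?_, ?_⟩
    · intro v hv
      refine ⟨c i0, ?_, hfc⟩
      have hvne : v ≠ c i0 := by intro h; rw [h, hfc] at hv; omega
      have hvT : v ∉ T := by
        intro h
        obtain ⟨j, hj, rfl⟩ := hTmem v h
        rw [hfs j hj] at hv; omega
      -- v is c j (j ≠ i0), s i0, or in R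
      by_cases hvR : v ∈ R
      · exact hRc v hvR i0
      · rw [hRmem] at hvR
        push_neg at hvR
        obtain ⟨i, hi⟩ := hvR
        by_cases hci : v = c i
        · subst hci
          have : i ≠ i0 := fun h => hvne (by rw [h])
          exact (G.adj_comm _ _).mp (hcc i0 i (Ne.symm this))
        · have h := hi hci
          subst h
          have : i = i0 := by
            by_contra hne
            exact hvT ((hsT i).mpr hne)
          rw [this, hthin]
    · intro u v huv
      by_contra hcon
      push_neg at hcon
      obtain ⟨hu, hv⟩ := hcon
      -- positive vertices are c i0 or s j with j ≠ i0
      have key : ∀ w, f w ≠ 0 → w = c i0 ∨ ∃ j, j ≠ i0 ∧ w = s j := by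
        intro w hw
        simp only [hf] at hw
        split_ifs at hw with h1 h2
        · exact Or.inl h1
        · exact Or.inr (hTmem w h2)
        · omega
      rcases key u hu with rfl | ⟨j, hj, rfl⟩ <;> rcases key v hv with rfl | ⟨k, hk, rfl⟩
      · exact G.irrefl huv
      · exact hk ((hadj_sc i0 k).mp huv).symm
      · exact hj (hcinj ((hthin j (c i0)).mp huv)).symm
      · exact hss j k huv
  -- weight of f is l + 1
  have hweight : irdfWeight f = l + 1 := by
    have hcT : c i0 ∉ T := by
      intro h
      obtain ⟨j, _, hj⟩ := hTmem _ h
      exact hcs i0 j hj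
    have hsub : ∑ v ∈ insert (c i0) T, f v = ∑ v, f v := by
      apply Finset.sum_subset (Finset.subset_univ _)
      intro x _ hx
      simp only [Finset.mem_insert, not_or] at hx
      simp [hf, hx.1, hx.2]
    have hTsum : ∑ v ∈ T, f v = T.card := by
      have h1 : ∀ v ∈ T, f v = 1 := by
        intro v hv
        obtain ⟨j, hj, rfl⟩ := hTmem v hv
        exact hfs j hj
      rw [Finset.sum_congr rfl h1]
      simp
    have hTcard : T.card = l - 1 := by
      rw [hT, Finset.card_image_of_injective _ hsinj,
        Finset.card_erase_of_mem (Finset.mem_univ _)]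
      simp
    rw [irdfWeight, ← hsub, Finset.sum_insert hcT, hfc, hTsum, hTcard]
    omega
  -- now compute the infimum
  have hmem : l + 1 ∈ {w | ∃ f : V → ℕ, IsIRDF G f ∧ irdfWeight f = w} :=
    ⟨f, hIRDF, hweight⟩
  apply le_antisymm (Nat.sInf_le hmem)
  apply le_csInf ⟨_, hmem⟩
  rintro w ⟨g, ⟨hg2, hg0, hgind⟩, rfl⟩
  -- lower bound
  by_cases hc2 : ∃ i, g (c i) = 2
  · obtain ⟨i, hi⟩ := hc2
    have hone : ∀ j ∈ Finset.univ.erase i, 1 ≤ g (s j) := by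
      intro j hj
      rw [Finset.mem_erase] at hj
      by_contra h
      push_neg at h
      obtain ⟨u, hu, hu2⟩ := hg0 (s j) (by omega)
      rw [hthin] at hu
      subst hu
      rcases hgind (c j) (c i) (hcc j i hj.1) with h | h
      · omega
      · omega
    have := spider_sum_bound s hsinj g (Finset.univ.erase i) (c i)
      (fun j => hcs i j) hone
    rw [Finset.card_erase_of_mem (Finset.mem_univ _)] at this
    simp only [Finset.card_univ, Fintype.card_fin] at this
    omega
  · push_neg at hc2
    have hone : ∀ j ∈ (Finset.univ : Finset (Fin l)), 1 ≤ g (s j) := by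
      intro j _
      by_contra h
      push_neg at h
      obtain ⟨u, hu, hu2⟩ := hg0 (s j) (by omega)
      rw [hthin] at hu
      subst hu
      exact hc2 j hu2
    obtain ⟨r, hr⟩ := hR
    have hrs : ∀ j, r ≠ s j := fun j => ((hRmem r).mp hr j).2
    by_cases hgr : 1 ≤ g r
    · have := spider_sum_bound s hsinj g Finset.univ r hrs hone
      simp only [Finset.card_univ, Fintype.card_fin] at this
      omega
    · push_neg at hgr
      obtain ⟨u, hu, hu2⟩ := hg0 r (by omega)
      have hus : ∀ j, u ≠ s j := by
        intro j h
        subst h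
        exact hRs r hr j hu
      have := spider_sum_bound s hsinj g Finset.univ u hus hone
      simp only [Finset.card_univ, Fintype.card_fin] at this
      omega
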